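/- Let H be the real quaternions and f(z) a standard quaternion polynomial with associated polynomials g(N), h(N) (one real variable N) such that f(z₀) = g(N₀)z₀ + h(N₀) for all purely imaginary z₀ with N₀ = -z₀². A purely imaginary z₀ of norm N₀ is a root of f if and only if either (1) g(N₀) = 0 and h(N₀) = 0, or (2) g(N₀) ≠ 0, N₀ satisfies -g(N) ḡ(N) g(N) N = h(N) ḡ(N) h(N) at N = N₀, and z₀ = -g(N₀)⁻¹ h(N₀). -/
import Mathlib


/-- Criterion for purely imaginary roots: if `f(z₀) = g(N₀) z₀ + h(N₀)` for all
purely imaginary `z₀` (with `N₀ = -z₀²`), then such `z₀` is a root of `f` iff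
either `g(N₀) = h(N₀) = 0`, or `g(N₀) ≠ 0`, `N₀` satisfies
`-g(N) ḡ(N) g(N) N = h(N) ḡ(N) h(N)`, and `z₀ = -g(N₀)⁻¹ h(N₀)`. -/
theorem pure_imaginary_root_criterion
    (fval : Quaternion ℝ → Quaternion ℝ)
    (g h : Polynomial (Quaternion ℝ))
    (hf : ∀ z₀ : Quaternion ℝ, z₀.re = 0 →
      fval z₀ = Polynomial.eval (-(z₀ ^ 2)) g * z₀ + Polynomial.eval (-(z₀ ^ 2)) h) :
    ∀ z₀ : Quaternion ℝ, z₀.re = 0 →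
      (fval z₀ = 0 ↔
        (Polynomial.eval (-(z₀ ^ 2)) g = 0 ∧ Polynomial.eval (-(z₀ ^ 2)) h = 0) ∨
        (Polynomial.eval (-(z₀ ^ 2)) g ≠ 0 ∧
          -(Polynomial.eval (-(z₀ ^ 2)) g * star (Polynomial.eval (-(z₀ ^ 2)) g) *
              Polynomial.eval (-(z₀ ^ 2)) g * (-(z₀ ^ 2)))
            = Polynomial.eval (-(z₀ ^ 2)) h * star (Polynomial.eval (-(z₀ ^ 2)) g) *
              Polynomial.eval (-(z₀ ^ 2)) h ∧
          z₀ = -((Polynomial.eval (-(z₀ ^ 2)) g)⁻¹ * Polynomial.eval (-(z₀ ^ 2)) h))) := by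
  intro z₀ hz
  rw [hf z₀ hz]
  set G := Polynomial.eval (-(z₀ ^ 2)) g with hG
  set H := Polynomial.eval (-(z₀ ^ 2)) h with hH
  constructor
  · intro h0
    have hGz : G * z₀ = -H := eq_neg_of_add_eq_zero_left h0
    by_cases hg0 : G = 0
    · left
      refine ⟨hg0, ?_⟩
      simpa [hg0] using h0
    · right
      refine ⟨hg0, ?_, ?_⟩
      · -- norm equation
        have hcomm : z₀ * (star G * G) = (star G * G) * z₀ := by
          rw [Quaternion.star_mul_self]
          exact (Quaternion.coe_commute _ _).symm
        calc -(G * star G * G * (-(z₀ ^ 2)))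
            = G * (star G * G) * z₀ ^ 2 := by
              rw [Quaternion.self_mul_star, Quaternion.star_mul_self,
                (Quaternion.coe_commute (Quaternion.normSq G) G).eq]
              noncomm_ring
          _ = G * (z₀ * (star G * G)) * z₀ := by rw [hcomm]; noncomm_ring
          _ = (G * z₀) * (star G) * (G * z₀) := by noncomm_ring
          _ = H * star G * H := by rw [hGz]; noncomm_ring
      · have : z₀ = G⁻¹ * (G * z₀) := by
          rw [← mul_assoc, inv_mul_cancel₀ hg0, one_mul]
        rw [this, hGz, mul_neg]
  · rintro (⟨hg0, hh0⟩ | ⟨hg0, _, hz0⟩)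
    · simp [hg0, hh0]
    · rw [hz0, mul_neg, ← mul_assoc, mul_inv_cancel₀ hg0, one_mul, neg_add_cancel]
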